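/- arXiv:2309.00758 — 3 statements merged into one kernel-verified Lean document; each statement's English description precedes it below -/
import Mathlib

section
/- Let n ≥ 1 and let ψ be defined by ψ(A) = A if 1 ∉ A, ψ(A) = (Aᶜ ∪ {1}) \ {0} if 1 ∈ A, on subsets of {0,1,...,n}. Let S₁ ⊆ S₂ ⊆ ... ⊆ S_k be a chain of subsets of {1,...,n} (each avoiding 0) and suppose S_i is the first element containing 1 (i.e., 1 ∉ S_j for j < i and 1 ∈ S_j for j ≥ i). Then for all u with 1 ≤ u ≤ i−1 and all v with i ≤ v ≤ k, we have ψ(S_u) ∩ ψ(S_v) = ∅; moreover ψ(S₁) ⊆ ... ⊆ ψ(S_{i−1}) and ψ(S_k) ⊆ ψ(S_{k−1}) ⊆ ... ⊆ ψ(S_i). -/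
open Classical in
noncomputable def psi (n : ℕ) (A : Set (Fin (n + 1))) : Set (Fin (n + 1)) :=
  if (1 : Fin (n + 1)) ∈ A then (Aᶜ ∪ {1}) \ {0} else A

theorem stmt_3 (n k : ℕ) (hn : 1 ≤ n) (S : Fin k → Set (Fin (n + 1)))
    (hmono : Monotone S) (h0 : ∀ j, (0 : Fin (n + 1)) ∉ S j)
    (i : Fin k)
    (hbefore : ∀ j, j < i → (1 : Fin (n + 1)) ∉ S j)
    (hafter : ∀ j, i ≤ j → (1 : Fin (n + 1)) ∈ S j) :
    (∀ u v : Fin k, u < i → i ≤ v → psi n (S u) ∩ psi n (S v) = ∅) ∧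
    (∀ u u' : Fin k, u ≤ u' → u' < i → psi n (S u) ⊆ psi n (S u')) ∧
    (∀ v v' : Fin k, i ≤ v → v ≤ v' → psi n (S v') ⊆ psi n (S v)) := by
  refine ⟨?_, ?_, ?_⟩
  · intro u v hu hv
    rw [psi, psi, if_neg (hbefore u hu), if_pos (hafter v hv)]
    ext x
    simp only [Set.mem_inter_iff, Set.mem_diff, Set.mem_union, Set.mem_compl_iff,
      Set.mem_singleton_iff, Set.mem_empty_iff_false, iff_false]
    rintro ⟨hxu, hc | h1, -⟩
    · exact hc (hmono (le_of_lt (lt_of_lt_of_le hu hv)) hxu)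
    · exact hbefore u hu (h1 ▸ hxu)
  · intro u u' huu hu'
    rw [psi, psi, if_neg (hbefore u (lt_of_le_of_lt huu hu')), if_neg (hbefore u' hu')]
    exact hmono huu
  · intro v v' hv hvv
    rw [psi, psi, if_pos (hafter v hv), if_pos (hafter v' (le_trans hv hvv))]
    intro x hx
    refine ⟨hx.1.imp (fun h hc => h (hmono hvv hc)) id, hx.2⟩
end

section
/- Let n ≥ 1 and let ψ be defined by ψ(A) = A if 1 ∉ A, ψ(A) = (Aᶜ ∪ {1}) \ {0} if 1 ∈ A, on subsets of {0,1,...,n}. Let S₁ ⊆ ... ⊆ S_k and T₁ ⊆ ... ⊆ T_ℓ be two chains of subsets of {1,...,n} with S_k ∩ T_ℓ = ∅. Suppose 1 ∈ S₁ (so 1 belongs to every S_u) and 1 ∉ T_ℓ. Then the images form a single chain: ψ(T₁) ⊆ ... ⊆ ψ(T_ℓ) ⊆ ψ(S_k) ⊆ ψ(S_{k−1}) ⊆ ... ⊆ ψ(S₁). -/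
theorem stmt_5 (n k l : ℕ) (hn : 1 ≤ n)
    (S : Fin (k + 1) → Set (Fin (n + 1))) (T : Fin (l + 1) → Set (Fin (n + 1)))
    (hSmono : Monotone S) (hTmono : Monotone T)
    (hS0 : ∀ u, (0 : Fin (n + 1)) ∉ S u) (hT0 : ∀ v, (0 : Fin (n + 1)) ∉ T v)
    (hdisj : S (Fin.last k) ∩ T (Fin.last l) = ∅)
    (h1S : (1 : Fin (n + 1)) ∈ S 0)
    (h1T : (1 : Fin (n + 1)) ∉ T (Fin.last l)) :
    Monotone (fun v => psi n (T v)) ∧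
      psi n (T (Fin.last l)) ⊆ psi n (S (Fin.last k)) ∧
      Antitone (fun u => psi n (S u)) := by
  have h1Tv : ∀ v, (1 : Fin (n + 1)) ∉ T v := fun v hv =>
    h1T (hTmono (Fin.le_last v) hv)
  have h1Su : ∀ u, (1 : Fin (n + 1)) ∈ S u := fun u =>
    hSmono (Fin.zero_le u) h1S
  have hT : ∀ v, psi n (T v) = T v := fun v => by
    simp [psi, h1Tv v]
  have hS : ∀ u, psi n (S u) = ((S u)ᶜ ∪ {1}) \ {0} := fun u => by
    simp [psi, h1Su u]
  refine ⟨fun a b hab => by simp only [hT]; exact hTmono hab, ?_, ?_⟩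
  · rw [hT, hS]
    intro x hx
    have hxS : x ∉ S (Fin.last k) := fun h => by
      have := hdisj ▸ (Set.mem_inter h hx); exact this
    have hx0 : x ≠ 0 := fun h => hT0 _ (h ▸ hx)
    exact ⟨Or.inl hxS, hx0⟩
  · intro a b hab
    simp only [hS]
    intro x hx
    exact ⟨hx.1.imp (fun h hc => h (hSmono hab hc)) id, hx.2⟩
end

section
/- Let (a_0, ..., a_p) and (b_0, ..., b_q) be finite sequences of nonnegative real numbers, each log concave (a_i² ≥ a_{i−1}a_{i+1} for all interior i, similarly for b) with no internal zeros (each consecutive pair of the form a_{i-1}, a_{i+1} nonzero implies a_i nonzero; assume all terms positive for simplicity). Then the convolution c_k = Σ_{i} a_i b_{k−i} (for 0 ≤ k ≤ p+q, with out-of-range terms zero) is a log concave sequence: c_k² ≥ c_{k−1} c_{k+1} for all 1 ≤ k ≤ p+q−1. -/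
theorem aux_ratio (p : ℕ) (a : ℕ → ℝ) (ha_pos : ∀ i ≤ p, 0 < a i)
    (ha_zero : ∀ i, p < i → a i = 0)
    (ha_lc : ∀ i, 1 ≤ i → i + 1 ≤ p → a i ^ 2 ≥ a (i - 1) * a (i + 1)) :
    ∀ m n, 1 ≤ m → m ≤ n → a m * a (n - 1) ≥ a (m - 1) * a n := by
  have hnn : ∀ i, 0 ≤ a i := by
    intro i
    rcases le_or_gt i p with h | h
    · exact (ha_pos i h).le
    · rw [ha_zero i h]
  intro m n hm
  induction n with
  | zero => intro h; exact absurd h (by omega)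
  | succ n ih =>
    intro hmn
    rcases eq_or_lt_of_le hmn with heq | hlt
    · subst heq
      simp [mul_comm]
    · have hmn' : m ≤ n := by omega
      have ih' := ih hmn'
      have hgoal : n + 1 - 1 = n := by omega
      rw [hgoal]
      rcases le_or_gt (n + 1) p with hle | hgt
      · have h1 : 1 ≤ n := by omega
        have lc := ha_lc n h1 hle
        have hpn : 0 < a n := ha_pos n (by omega)
        have hpn1 : 0 < a (n - 1) := ha_pos _ (by omega)
        have h2 : 0 ≤ a (m - 1) := hnn _
        have h3 : 0 ≤ a (n + 1) := hnn _
        have h4 : 0 ≤ a m := hnn _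
        nlinarith [ih', lc, mul_nonneg h2 h3]
      · rw [ha_zero _ hgt, mul_zero]
        exact mul_nonneg (hnn m) (hnn n)

theorem stmt_12 (p q : ℕ) (a b : ℕ → ℝ)
    (ha_pos : ∀ i ≤ p, 0 < a i) (hb_pos : ∀ j ≤ q, 0 < b j)
    (ha_zero : ∀ i, p < i → a i = 0) (hb_zero : ∀ j, q < j → b j = 0)
    (ha_lc : ∀ i, 1 ≤ i → i + 1 ≤ p → a i ^ 2 ≥ a (i - 1) * a (i + 1))
    (hb_lc : ∀ j, 1 ≤ j → j + 1 ≤ q → b j ^ 2 ≥ b (j - 1) * b (j + 1))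
    (c : ℕ → ℝ) (hc : ∀ k, c k = ∑ i ∈ Finset.range (k + 1), a i * b (k - i)) :
    ∀ k, 1 ≤ k → k + 1 ≤ p + q → c k ^ 2 ≥ c (k - 1) * c (k + 1) := by
  have hann : ∀ i, 0 ≤ a i := by
    intro i; rcases le_or_gt i p with h | h
    · exact (ha_pos i h).le
    · rw [ha_zero i h]
  have hbnn : ∀ j, 0 ≤ b j := by
    intro j; rcases le_or_gt j q with h | h
    · exact (hb_pos j h).le
    · rw [hb_zero j h]
  have ra := aux_ratio p a ha_pos ha_zero ha_lc
  have rb := aux_ratio q b hb_pos hb_zero hb_lc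
  intro k hk1 _hk2
  set s := Finset.range (k + 2) with hs
  set A : ℕ → ℝ := fun j => if j = 0 then 0 else a (j - 1) with hA
  set B : ℕ → ℝ := fun j => if j ≤ k then b (k - j) else 0 with hB
  set B' : ℕ → ℝ := fun j => b (k + 1 - j) with hB'
  -- pointwise values
  have hA0 : A 0 = 0 := by simp [hA]
  have hAs : ∀ i, A (i + 1) = a i := by intro i; simp [hA]
  have hBval : ∀ j, j ≤ k → B j = b (k - j) := by
    intro j hj; simp only [hB]; rw [if_pos hj]
  have hBtop : ∀ j, k < j → B j = 0 := by
    intro j hj; simp only [hB]; rw [if_neg (by omega)]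
  have hB'val : ∀ j, B' j = b (k + 1 - j) := fun j => rfl
  -- the four sum identities
  have h1 : ∑ j ∈ s, a j * B j = c k := by
    rw [hc, hs, Finset.sum_range_succ]
    rw [hBtop (k + 1) (by omega), mul_zero, add_zero]
    apply Finset.sum_congr rfl
    intro i hi
    rw [hBval i (Nat.lt_succ_iff.mp (Finset.mem_range.mp hi))]
  have h2 : ∑ j ∈ s, A j * B' j = c k := by
    rw [hc, hs, Finset.sum_range_succ']
    rw [hA0, zero_mul, add_zero]
    apply Finset.sum_congr rfl
    intro i _
    rw [hAs i, hB'val]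
    congr 2
    omega
  have h3 : ∑ j ∈ s, a j * B' j = c (k + 1) := by
    rw [hc, hs]
  have h4 : ∑ j ∈ s, A j * B j = c (k - 1) := by
    rw [hc, hs, show k - 1 + 1 = k from by omega, Finset.sum_range_succ,
      Finset.sum_range_succ']
    rw [hBtop (k + 1) (by omega), mul_zero, add_zero, hA0, zero_mul, add_zero]
    apply Finset.sum_congr rfl
    intro i hi
    have hik : i < k := Finset.mem_range.mp hi
    rw [hAs i, hBval (i + 1) (by omega)]
    congr 2
    omega
  -- minors are nonnegative
  have claimA : ∀ j1 j2, j1 < j2 → 0 ≤ a j1 * A j2 - A j1 * a j2 := by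
    intro j1 j2 h
    have hj2 : A j2 = a (j2 - 1) := by simp only [hA]; rw [if_neg (by omega)]
    rcases Nat.eq_zero_or_pos j1 with h0 | h0
    · subst h0
      rw [hA0, zero_mul, sub_zero, hj2]
      exact mul_nonneg (hann _) (hann _)
    · have hj1 : A j1 = a (j1 - 1) := by simp only [hA]; rw [if_neg (by omega)]
      rw [hj1, hj2]
      have := ra j1 j2 h0 h.le
      linarith
  have claimB : ∀ j1 j2, j1 < j2 → j2 ≤ k + 1 → 0 ≤ B j1 * B' j2 - B' j1 * B j2 := by
    intro j1 j2 h hle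
    rcases le_or_gt j2 k with hcase | hcase
    · rw [hBval j1 (by omega), hBval j2 hcase, hB'val, hB'val]
      have hr := rb (k + 1 - j2) (k + 1 - j1) (by omega) (by omega)
      have e1 : k + 1 - j1 - 1 = k - j1 := by omega
      have e2 : k + 1 - j2 - 1 = k - j2 := by omega
      rw [e1, e2] at hr
      nlinarith [hr]
    · rw [hBtop j2 hcase, mul_zero, sub_zero, hBval j1 (by omega), hB'val]
      exact mul_nonneg (hbnn _) (hbnn _)
  have key : ∀ j1 j2, j1 ≤ k + 1 → j2 ≤ k + 1 →
      0 ≤ (a j1 * A j2 - A j1 * a j2) * (B j1 * B' j2 - B' j1 * B j2) := by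
    intro j1 j2 hj1 hj2
    rcases lt_trichotomy j1 j2 with h | h | h
    · exact mul_nonneg (claimA _ _ h) (claimB _ _ h hj2)
    · subst h
      have : a j1 * A j1 - A j1 * a j1 = 0 := by ring
      rw [this, zero_mul]
    · have e1 : a j1 * A j2 - A j1 * a j2 ≤ 0 := by
        have := claimA _ _ h; linarith
      have e2 : B j1 * B' j2 - B' j1 * B j2 ≤ 0 := by
        have := claimB _ _ h hj1; linarith
      nlinarith [e1, e2]
  -- expansion
  have hck2 : c k ^ 2 = (∑ j ∈ s, a j * B j) * (∑ j ∈ s, A j * B' j) := by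
    rw [h1, h2]; ring
  have expand : c k ^ 2 - c (k - 1) * c (k + 1) =
      ∑ j1 ∈ s, ∑ j2 ∈ s,
        ((a j1 * B j1) * (A j2 * B' j2) - (A j1 * B j1) * (a j2 * B' j2)) := by
    rw [hck2, ← h3, ← h4, Finset.sum_mul_sum, Finset.sum_mul_sum,
      ← Finset.sum_sub_distrib]
    apply Finset.sum_congr rfl
    intro j1 _
    rw [← Finset.sum_sub_distrib]
  have double : (2 : ℝ) * (c k ^ 2 - c (k - 1) * c (k + 1)) =
      ∑ j1 ∈ s, ∑ j2 ∈ s,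
        (a j1 * A j2 - A j1 * a j2) * (B j1 * B' j2 - B' j1 * B j2) := by
    rw [expand, two_mul]
    nth_rewrite 2 [Finset.sum_comm]
    rw [← Finset.sum_add_distrib]
    apply Finset.sum_congr rfl
    intro j1 _
    rw [← Finset.sum_add_distrib]
    apply Finset.sum_congr rfl
    intro j2 _
    ring
  have pos : 0 ≤ ∑ j1 ∈ s, ∑ j2 ∈ s,
      (a j1 * A j2 - A j1 * a j2) * (B j1 * B' j2 - B' j1 * B j2) := by
    apply Finset.sum_nonneg
    intro j1 hj1
    apply Finset.sum_nonneg
    intro j2 hj2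
    have m1 : j1 < k + 2 := Finset.mem_range.mp hj1
    have m2 : j2 < k + 2 := Finset.mem_range.mp hj2
    exact key j1 j2 (by omega) (by omega)
  nlinarith [pos, double]
end
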